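/- Fix λ > 0 and let Ω_λ = {u ∈ H₀(S²) : |u(r)| ≤ λ for a.e. r ∈ S²}. The map Γ : Ω_λ ⊂ H₀(S²) → H₀(S²) is continuous with respect to the L²(S²)-norm, and its image Γ(Ω_λ) is relatively compact in L²(S²). -/

import Mathlib

open MeasureTheory Filter Topology Real
open scoped ENNReal NNReal BoundedContinuousFunction

/-- The unit sphere `S² ⊆ ℝ³`. -/
noncomputable abbrev S2 := Metric.sphere (0 : EuclideanSpace ℝ (Fin 3)) 1

/-- The surface measure `σ` on `S²`. -/
noncomputable def sphereMeasure : Measure S2 :=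
  (volume : Measure (EuclideanSpace ℝ (Fin 3))).toSphere

/-- `|r × r'|`, the Euclidean norm of the cross product of `r, r' ∈ S²`. -/
noncomputable def crossNorm (r r' : S2) : ℝ :=
  ‖(EuclideanSpace.equiv (Fin 3) ℝ).symm
    (crossProduct (EuclideanSpace.equiv (Fin 3) ℝ (r : EuclideanSpace ℝ (Fin 3)))
      (EuclideanSpace.equiv (Fin 3) ℝ (r' : EuclideanSpace ℝ (Fin 3))))‖

/-- `Γ[u](r) = (∫_{S²} e^{-u} dσ)⁻¹ ∫_{S²} (|r × r'| - π/4) e^{-u(r')} dσ(r')`. -/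
noncomputable def GammaS (u : S2 → ℝ) (r : S2) : ℝ :=
  (∫ r', Real.exp (-(u r')) ∂sphereMeasure)⁻¹ *
    ∫ r', (crossNorm r r' - π / 4) * Real.exp (-(u r')) ∂sphereMeasure

/-- `H₀(S²) = {u ∈ L²(S²) : u(-r) = u(r) a.e., ∫ u dσ = 0}`. -/
noncomputable def H0 : Set (Lp ℝ 2 sphereMeasure) :=
  {u | (∀ᵐ r ∂sphereMeasure, u (-r) = u r) ∧ (∫ r, u r ∂sphereMeasure) = 0}

/-- `Ω_λ = {u ∈ H₀(S²) : |u(r)| ≤ λ a.e.}`. -/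
noncomputable def OmegaLam (lam : ℝ) : Set (Lp ℝ 2 sphereMeasure) :=
  {u ∈ H0 | ∀ᵐ r ∂sphereMeasure, |u r| ≤ lam}

/-! ### Auxiliary lemmas -/

section Aux

instance : IsFiniteMeasure sphereMeasure := by unfold sphereMeasure; infer_instance

lemma sphereMeasure_univ_ne_zero : sphereMeasure Set.univ ≠ 0 := by
  unfold sphereMeasure
  rw [Measure.toSphere_apply_univ]
  refine mul_ne_zero ?_ (Metric.measure_ball_pos _ _ one_pos).ne'
  simp [finrank_euclideanSpace_fin]

lemma sphereMeasure_real_pos : 0 < (sphereMeasure Set.univ).toReal :=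
  ENNReal.toReal_pos sphereMeasure_univ_ne_zero (measure_ne_top _ _)

lemma norm_cross_le (a b : EuclideanSpace ℝ (Fin 3)) :
    ‖(EuclideanSpace.equiv (Fin 3) ℝ).symm
      (crossProduct (EuclideanSpace.equiv (Fin 3) ℝ a) (EuclideanSpace.equiv (Fin 3) ℝ b))‖
      ≤ ‖a‖ * ‖b‖ := by
  rw [EuclideanSpace.norm_eq, EuclideanSpace.norm_eq, EuclideanSpace.norm_eq,
    ← Real.sqrt_mul (by positivity)]
  apply Real.sqrt_le_sqrt
  simp only [EuclideanSpace.equiv, cross_apply, Fin.sum_univ_three, Real.norm_eq_abs, sq_abs,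
    PiLp.coe_continuousLinearEquiv, PiLp.coe_symm_continuousLinearEquiv, PiLp.toLp_apply, Matrix.cons_val_zero, Matrix.cons_val_one, Matrix.head_cons,
    Matrix.cons_val_two, Matrix.tail_cons]
  nlinarith [sq_nonneg (a 0 * b 0 + a 1 * b 1 + a 2 * b 2), sq_nonneg (a 0 * b 1 - a 1 * b 0),
    sq_nonneg (a 1 * b 2 - a 2 * b 1), sq_nonneg (a 2 * b 0 - a 0 * b 2)]

lemma norm_coe_S2 (r : S2) : ‖(r : EuclideanSpace ℝ (Fin 3))‖ = 1 := by
  have h := r.2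
  rwa [mem_sphere_zero_iff_norm] at h

lemma crossNorm_nonneg (r r' : S2) : 0 ≤ crossNorm r r' := norm_nonneg _

lemma crossNorm_le_one (r r' : S2) : crossNorm r r' ≤ 1 := by
  have := norm_cross_le (r : EuclideanSpace ℝ (Fin 3)) (r' : EuclideanSpace ℝ (Fin 3))
  rwa [norm_coe_S2, norm_coe_S2, one_mul] at this

lemma abs_kernel_le (r r' : S2) : |crossNorm r r' - π / 4| ≤ 1 := by
  have h1 := crossNorm_nonneg r r'
  have h2 := crossNorm_le_one r r'
  have h3 := Real.pi_pos
  have h4 := Real.pi_le_four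
  rw [abs_le]; constructor <;> linarith

lemma crossNorm_sub_le_left (r s r' : S2) :
    |crossNorm r r' - crossNorm s r'| ≤ dist r s := by
  set e := EuclideanSpace.equiv (Fin 3) ℝ
  have key : e.symm (crossProduct (e (r : EuclideanSpace ℝ (Fin 3))) (e (r' : EuclideanSpace ℝ (Fin 3))))
      - e.symm (crossProduct (e (s : EuclideanSpace ℝ (Fin 3))) (e (r' : EuclideanSpace ℝ (Fin 3))))
      = e.symm (crossProduct (e ((r : EuclideanSpace ℝ (Fin 3)) - (s : EuclideanSpace ℝ (Fin 3))))
          (e (r' : EuclideanSpace ℝ (Fin 3)))) := by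
    rw [map_sub e, map_sub crossProduct, LinearMap.sub_apply, map_sub e.symm]
  calc |crossNorm r r' - crossNorm s r'| ≤ ‖_ - _‖ := abs_norm_sub_norm_le _ _
    _ = ‖e.symm (crossProduct (e ((r : EuclideanSpace ℝ (Fin 3)) - (s : EuclideanSpace ℝ (Fin 3))))
          (e (r' : EuclideanSpace ℝ (Fin 3))))‖ := by rw [key]
    _ ≤ ‖(r : EuclideanSpace ℝ (Fin 3)) - (s : EuclideanSpace ℝ (Fin 3))‖ * ‖(r' : EuclideanSpace ℝ (Fin 3))‖ :=
        norm_cross_le _ _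
    _ = dist r s := by rw [norm_coe_S2, mul_one, Subtype.dist_eq, dist_eq_norm]

lemma crossNorm_sub_le_right (r r' s' : S2) :
    |crossNorm r r' - crossNorm r s'| ≤ dist r' s' := by
  set e := EuclideanSpace.equiv (Fin 3) ℝ
  have key : e.symm (crossProduct (e (r : EuclideanSpace ℝ (Fin 3))) (e (r' : EuclideanSpace ℝ (Fin 3))))
      - e.symm (crossProduct (e (r : EuclideanSpace ℝ (Fin 3))) (e (s' : EuclideanSpace ℝ (Fin 3))))
      = e.symm (crossProduct (e (r : EuclideanSpace ℝ (Fin 3)))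
          (e ((r' : EuclideanSpace ℝ (Fin 3)) - (s' : EuclideanSpace ℝ (Fin 3))))) := by
    rw [map_sub e, map_sub (crossProduct (e (r : EuclideanSpace ℝ (Fin 3)))), map_sub e.symm]
  calc |crossNorm r r' - crossNorm r s'| ≤ ‖_ - _‖ := abs_norm_sub_norm_le _ _
    _ = ‖e.symm (crossProduct (e (r : EuclideanSpace ℝ (Fin 3)))
          (e ((r' : EuclideanSpace ℝ (Fin 3)) - (s' : EuclideanSpace ℝ (Fin 3)))))‖ := by rw [key]
    _ ≤ ‖(r : EuclideanSpace ℝ (Fin 3))‖ * ‖(r' : EuclideanSpace ℝ (Fin 3)) - (s' : EuclideanSpace ℝ (Fin 3))‖ :=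
        norm_cross_le _ _
    _ = dist r' s' := by rw [norm_coe_S2, one_mul, Subtype.dist_eq, dist_eq_norm]

lemma continuous_crossNorm_right (r : S2) : Continuous fun r' => crossNorm r r' := by
  refine (lipschitzWith_iff_dist_le_mul.mpr fun a b => ?_ : LipschitzWith 1 _).continuous
  rw [Real.dist_eq, NNReal.coe_one, one_mul]
  exact crossNorm_sub_le_right r a b

lemma abs_exp_sub_exp_le {c x y : ℝ} (hx : x ≤ c) (hy : y ≤ c) :
    |Real.exp x - Real.exp y| ≤ Real.exp c * |x - y| := by
  wlog h : y ≤ x generalizing x y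
  · rw [abs_sub_comm, abs_sub_comm x y]; exact this hy hx (le_of_not_ge h)
  rw [abs_of_nonneg (sub_nonneg.mpr (Real.exp_le_exp.mpr h)), abs_of_nonneg (sub_nonneg.mpr h)]
  have h1 : (y - x) + 1 ≤ Real.exp (y - x) := Real.add_one_le_exp _
  have h2 : Real.exp x ≤ Real.exp c := Real.exp_le_exp.mpr hx
  have h3 : Real.exp x * Real.exp (y - x) = Real.exp y := by
    rw [← Real.exp_add]; ring_nf
  nlinarith [Real.exp_pos x, Real.exp_pos y,
    mul_le_mul_of_nonneg_left h1 (Real.exp_pos x).le]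

end Aux

section UFacts

variable {lam : ℝ} {u : S2 → ℝ}

lemma integrable_expNeg (hm : AEStronglyMeasurable u sphereMeasure)
    (hb : ∀ᵐ r ∂sphereMeasure, |u r| ≤ lam) :
    Integrable (fun r => Real.exp (-(u r))) sphereMeasure := by
  have hme : AEStronglyMeasurable (fun r => Real.exp (-(u r))) sphereMeasure :=
    Real.continuous_exp.comp_aestronglyMeasurable hm.neg
  refine Integrable.mono' (integrable_const (Real.exp lam)) hme ?_
  filter_upwards [hb] with r hr
  rw [Real.norm_eq_abs, abs_of_pos (Real.exp_pos _)]
  exact Real.exp_le_exp.mpr (by linarith [(abs_le.mp hr).1])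

lemma Z_pos (hm : AEStronglyMeasurable u sphereMeasure)
    (hb : ∀ᵐ r ∂sphereMeasure, |u r| ≤ lam) :
    Real.exp (-lam) * (sphereMeasure Set.univ).toReal
      ≤ ∫ r, Real.exp (-(u r)) ∂sphereMeasure := by
  have h := integral_mono_ae (integrable_const (Real.exp (-lam))) (integrable_expNeg hm hb) ?_
  · simpa [mul_comm, measureReal_def] using h
  · filter_upwards [hb] with r hr
    exact Real.exp_le_exp.mpr (by linarith [(abs_le.mp hr).2])

lemma integrable_kernel (hm : AEStronglyMeasurable u sphereMeasure)
    (hb : ∀ᵐ r ∂sphereMeasure, |u r| ≤ lam) (r : S2) :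
    Integrable (fun r' => (crossNorm r r' - π / 4) * Real.exp (-(u r'))) sphereMeasure := by
  refine Integrable.bdd_mul (integrable_expNeg hm hb)
    (((continuous_crossNorm_right r).sub continuous_const).aestronglyMeasurable) (c := 1) (Filter.Eventually.of_forall fun r' => ?_)
  rw [Real.norm_eq_abs]; exact abs_kernel_le r r'

lemma N_abs_le (hm : AEStronglyMeasurable u sphereMeasure)
    (hb : ∀ᵐ r ∂sphereMeasure, |u r| ≤ lam) (r : S2) :
    |∫ r', (crossNorm r r' - π / 4) * Real.exp (-(u r')) ∂sphereMeasure|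
      ≤ ∫ r', Real.exp (-(u r')) ∂sphereMeasure := by
  calc |∫ r', (crossNorm r r' - π / 4) * Real.exp (-(u r')) ∂sphereMeasure|
      = ‖∫ r', (crossNorm r r' - π / 4) * Real.exp (-(u r')) ∂sphereMeasure‖ :=
        (Real.norm_eq_abs _).symm
    _ ≤ ∫ r', ‖(crossNorm r r' - π / 4) * Real.exp (-(u r'))‖ ∂sphereMeasure :=
        norm_integral_le_integral_norm _
    _ ≤ ∫ r', Real.exp (-(u r')) ∂sphereMeasure := by
        refine integral_mono_ae ((integrable_kernel hm hb r).norm) (integrable_expNeg hm hb)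
          (Filter.Eventually.of_forall fun r' => ?_)
        dsimp only
        rw [Real.norm_eq_abs, abs_mul, abs_of_pos (Real.exp_pos _)]
        exact mul_le_of_le_one_left (Real.exp_pos _).le (abs_kernel_le r r')

end UFacts

section Gamma

variable {lam : ℝ}

lemma gammaS_abs_le (hlam : 0 < lam) {u : S2 → ℝ} (hm : AEStronglyMeasurable u sphereMeasure)
    (hb : ∀ᵐ r ∂sphereMeasure, |u r| ≤ lam) (r : S2) : |GammaS u r| ≤ 1 := by
  set Z := ∫ r', Real.exp (-(u r')) ∂sphereMeasure with hZdef
  have hZ : 0 < Z :=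
    lt_of_lt_of_le (mul_pos (Real.exp_pos _) sphereMeasure_real_pos) (Z_pos hm hb)
  have hN := N_abs_le hm hb r
  rw [GammaS, abs_mul, abs_inv, abs_of_pos hZ]
  calc Z⁻¹ * |∫ r', (crossNorm r r' - π / 4) * Real.exp (-(u r')) ∂sphereMeasure|
      ≤ Z⁻¹ * Z := by gcongr
    _ = 1 := inv_mul_cancel₀ hZ.ne'

lemma gammaS_lipschitz (hlam : 0 < lam) {u : S2 → ℝ} (hm : AEStronglyMeasurable u sphereMeasure)
    (hb : ∀ᵐ r ∂sphereMeasure, |u r| ≤ lam) : LipschitzWith 1 (GammaS u) := by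
  rw [lipschitzWith_iff_dist_le_mul]
  intro r s
  set Z := ∫ r', Real.exp (-(u r')) ∂sphereMeasure with hZdef
  have hZ : 0 < Z := lt_of_lt_of_le (mul_pos (Real.exp_pos _) sphereMeasure_real_pos) (Z_pos hm hb)
  rw [NNReal.coe_one, one_mul, Real.dist_eq, GammaS, GammaS, ← mul_sub, abs_mul, abs_inv,
    abs_of_pos hZ]
  have hsub : (∫ r', (crossNorm r r' - π / 4) * Real.exp (-(u r')) ∂sphereMeasure)
      - ∫ r', (crossNorm s r' - π / 4) * Real.exp (-(u r')) ∂sphereMeasure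
      = ∫ r', (crossNorm r r' - crossNorm s r') * Real.exp (-(u r')) ∂sphereMeasure := by
    rw [← integral_sub (integrable_kernel hm hb r) (integrable_kernel hm hb s)]
    exact integral_congr_ae (Filter.Eventually.of_forall fun r' => by simp only [Pi.sub_apply]; ring)
  rw [hsub]
  have habs : |∫ r', (crossNorm r r' - crossNorm s r') * Real.exp (-(u r')) ∂sphereMeasure|
      ≤ dist r s * Z := by
    have hint : Integrable (fun r' => (crossNorm r r' - crossNorm s r') * Real.exp (-(u r')))
        sphereMeasure := by
      refine ((integrable_kernel hm hb r).sub (integrable_kernel hm hb s)).congr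
        (Filter.Eventually.of_forall fun r' => by simp only [Pi.sub_apply]; ring)
    calc |∫ r', (crossNorm r r' - crossNorm s r') * Real.exp (-(u r')) ∂sphereMeasure|
        = ‖∫ r', (crossNorm r r' - crossNorm s r') * Real.exp (-(u r')) ∂sphereMeasure‖ :=
          (Real.norm_eq_abs _).symm
      _ ≤ ∫ r', ‖(crossNorm r r' - crossNorm s r') * Real.exp (-(u r'))‖ ∂sphereMeasure :=
          norm_integral_le_integral_norm _
      _ ≤ ∫ r', dist r s * Real.exp (-(u r')) ∂sphereMeasure := by
          refine integral_mono_ae hint.norm ((integrable_expNeg hm hb).const_mul _)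
            (Filter.Eventually.of_forall fun r' => ?_)
          dsimp only
          rw [Real.norm_eq_abs, abs_mul, abs_of_pos (Real.exp_pos _)]
          exact mul_le_mul_of_nonneg_right (crossNorm_sub_le_left r s r') (Real.exp_pos _).le
      _ = dist r s * Z := by rw [integral_const_mul]
  calc Z⁻¹ * |∫ r', (crossNorm r r' - crossNorm s r') * Real.exp (-(u r')) ∂sphereMeasure|
      ≤ Z⁻¹ * (dist r s * Z) := by gcongr
    _ = dist r s := by field_simp

lemma gammaS_diff_le (hlam : 0 < lam) {u v : S2 → ℝ}
    (hmu : AEStronglyMeasurable u sphereMeasure) (hbu : ∀ᵐ r ∂sphereMeasure, |u r| ≤ lam)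
    (hmv : AEStronglyMeasurable v sphereMeasure) (hbv : ∀ᵐ r ∂sphereMeasure, |v r| ≤ lam)
    (r : S2) :
    |GammaS u r - GammaS v r|
      ≤ (2 / (Real.exp (-lam) * (sphereMeasure Set.univ).toReal)) *
        ∫ r', |Real.exp (-(u r')) - Real.exp (-(v r'))| ∂sphereMeasure := by
  set c0 := Real.exp (-lam) * (sphereMeasure Set.univ).toReal with hc0def
  have hc0 : 0 < c0 := mul_pos (Real.exp_pos _) sphereMeasure_real_pos
  set Zu := ∫ r', Real.exp (-(u r')) ∂sphereMeasure with hZu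
  set Zv := ∫ r', Real.exp (-(v r')) ∂sphereMeasure with hZv
  set A := ∫ r', (crossNorm r r' - π / 4) * Real.exp (-(u r')) ∂sphereMeasure with hA
  set B := ∫ r', (crossNorm r r' - π / 4) * Real.exp (-(v r')) ∂sphereMeasure with hB
  set δ := ∫ r', |Real.exp (-(u r')) - Real.exp (-(v r'))| ∂sphereMeasure with hδ
  have hδ0 : 0 ≤ δ := integral_nonneg fun r' => abs_nonneg _
  have hZuc : c0 ≤ Zu := Z_pos hmu hbu
  have hZvc : c0 ≤ Zv := Z_pos hmv hbv
  have hZu0 : 0 < Zu := lt_of_lt_of_le hc0 hZuc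
  have hZv0 : 0 < Zv := lt_of_lt_of_le hc0 hZvc
  have hintd : Integrable (fun r' => Real.exp (-(u r')) - Real.exp (-(v r'))) sphereMeasure :=
    (integrable_expNeg hmu hbu).sub (integrable_expNeg hmv hbv)
  have hZdiff : |Zu - Zv| ≤ δ := by
    rw [hZu, hZv, ← integral_sub (integrable_expNeg hmu hbu) (integrable_expNeg hmv hbv)]
    calc |∫ r', (Real.exp (-(u r')) - Real.exp (-(v r'))) ∂sphereMeasure|
        = ‖∫ r', (Real.exp (-(u r')) - Real.exp (-(v r'))) ∂sphereMeasure‖ :=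
          (Real.norm_eq_abs _).symm
      _ ≤ ∫ r', ‖Real.exp (-(u r')) - Real.exp (-(v r'))‖ ∂sphereMeasure :=
          norm_integral_le_integral_norm _
      _ = δ := by simp [hδ, Real.norm_eq_abs]
  have hNdiff : |A - B| ≤ δ := by
    have heq : A - B = ∫ r', (crossNorm r r' - π / 4) *
        (Real.exp (-(u r')) - Real.exp (-(v r'))) ∂sphereMeasure := by
      rw [hA, hB, ← integral_sub (integrable_kernel hmu hbu r) (integrable_kernel hmv hbv r)]
      exact integral_congr_ae (Filter.Eventually.of_forall fun r' => by simp only [Pi.sub_apply]; ring)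
    have hint : Integrable (fun r' => (crossNorm r r' - π / 4) *
        (Real.exp (-(u r')) - Real.exp (-(v r')))) sphereMeasure := by
      refine Integrable.bdd_mul hintd
        (((continuous_crossNorm_right r).sub continuous_const).aestronglyMeasurable)
        (c := 1) (Filter.Eventually.of_forall fun r' => by rw [Real.norm_eq_abs]; exact abs_kernel_le r r')
    rw [heq]
    calc |∫ r', (crossNorm r r' - π / 4) * (Real.exp (-(u r')) - Real.exp (-(v r'))) ∂sphereMeasure|
        = ‖∫ r', (crossNorm r r' - π / 4) * (Real.exp (-(u r')) - Real.exp (-(v r'))) ∂sphereMeasure‖ :=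
          (Real.norm_eq_abs _).symm
      _ ≤ ∫ r', ‖(crossNorm r r' - π / 4) * (Real.exp (-(u r')) - Real.exp (-(v r')))‖ ∂sphereMeasure :=
          norm_integral_le_integral_norm _
      _ ≤ ∫ r', |Real.exp (-(u r')) - Real.exp (-(v r'))| ∂sphereMeasure := by
          refine integral_mono_ae hint.norm hintd.abs (Filter.Eventually.of_forall fun r' => ?_)
          dsimp only
          rw [Real.norm_eq_abs, abs_mul]
          exact mul_le_of_le_one_left (abs_nonneg _) (abs_kernel_le r r')
  have hBle : |B| ≤ Zv := N_abs_le hmv hbv r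
  have key : Zu⁻¹ * A - Zv⁻¹ * B = Zu⁻¹ * (A - B) + (Zv - Zu) * (Zu⁻¹ * Zv⁻¹) * B := by
    field_simp
    ring
  rw [GammaS, GammaS, ← hZu, ← hZv, ← hA, ← hB, key]
  have h1 : |Zu⁻¹ * (A - B)| ≤ Zu⁻¹ * δ := by
    rw [abs_mul, abs_inv, abs_of_pos hZu0]
    exact mul_le_mul_of_nonneg_left hNdiff (by positivity)
  have h2 : |(Zv - Zu) * (Zu⁻¹ * Zv⁻¹) * B| ≤ δ * (Zu⁻¹ * Zv⁻¹) * Zv := by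
    rw [abs_mul, abs_mul, abs_mul, abs_inv, abs_inv, abs_of_pos hZu0, abs_of_pos hZv0,
      abs_sub_comm]
    have := mul_le_mul hZdiff hBle (abs_nonneg _) hδ0
    nlinarith [mul_pos (inv_pos.mpr hZu0) (inv_pos.mpr hZv0), abs_nonneg (Zu - Zv),
      abs_nonneg B, hZdiff, hBle]
  have hinv : Zu⁻¹ ≤ c0⁻¹ := by
    exact inv_anti₀ hc0 hZuc
  calc |Zu⁻¹ * (A - B) + (Zv - Zu) * (Zu⁻¹ * Zv⁻¹) * B|
      ≤ |Zu⁻¹ * (A - B)| + |(Zv - Zu) * (Zu⁻¹ * Zv⁻¹) * B| := abs_add_le _ _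
    _ ≤ Zu⁻¹ * δ + δ * (Zu⁻¹ * Zv⁻¹) * Zv := add_le_add h1 h2
    _ = 2 * Zu⁻¹ * δ := by field_simp; ring
    _ ≤ 2 / c0 * δ := by
        rw [div_eq_mul_inv]
        exact mul_le_mul_of_nonneg_right (by linarith) hδ0

end Gamma

/-- Theorem 1.1: for fixed `λ`, the map `Γ : Ω_λ ⊆ H₀(S²) → H₀(S²)` maps into `L²`,
is continuous for the `L²` norm, and its image is relatively compact in `L²`. -/
theorem gammaS_continuous_and_compact (lam : ℝ) (hlam : 0 < lam) :
    (∀ u ∈ OmegaLam lam, MemLp (GammaS u) 2 sphereMeasure) ∧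
    (∀ (un : ℕ → Lp ℝ 2 sphereMeasure) (u₀ : Lp ℝ 2 sphereMeasure),
      (∀ n, un n ∈ OmegaLam lam) → u₀ ∈ OmegaLam lam →
      Tendsto un atTop (𝓝 u₀) →
      Tendsto (fun n => eLpNorm (fun r => GammaS (un n) r - GammaS u₀ r) 2 sphereMeasure)
        atTop (𝓝 0)) ∧
    IsCompact (closure {f : Lp ℝ 2 sphereMeasure |
      ∃ u ∈ OmegaLam lam, (f : S2 → ℝ) =ᵐ[sphereMeasure] GammaS u}) := by
  refine ⟨?_, ?_, ?_⟩
  · -- Memℒp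
    intro u hu
    exact MemLp.of_bound
      ((gammaS_lipschitz hlam (Lp.aestronglyMeasurable u) hu.2).continuous.aestronglyMeasurable)
      1 (Filter.Eventually.of_forall fun r => by
        rw [Real.norm_eq_abs]; exact gammaS_abs_le hlam (Lp.aestronglyMeasurable u) hu.2 r)
  · -- continuity
    intro un u₀ hun hu₀ htend
    set c0 := Real.exp (-lam) * (sphereMeasure Set.univ).toReal with hc0def
    have hc0 : 0 < c0 := mul_pos (Real.exp_pos _) sphereMeasure_real_pos
    set δ : ℕ → ℝ := fun n =>
      ∫ r', |Real.exp (-(un n r')) - Real.exp (-(u₀ r'))| ∂sphereMeasure with hδdef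
    have hδ0 : ∀ n, 0 ≤ δ n := fun n => integral_nonneg fun r' => abs_nonneg _
    -- δ n ≤ exp lam * ∫ |un n - u₀|
    have hδle : ∀ n, δ n ≤ Real.exp lam * ∫ r, |un n r - u₀ r| ∂sphereMeasure := by
      intro n
      have hint1 : Integrable (fun r' => |Real.exp (-(un n r')) - Real.exp (-(u₀ r'))|)
          sphereMeasure :=
        ((integrable_expNeg (Lp.aestronglyMeasurable (un n)) (hun n).2).sub
          (integrable_expNeg (Lp.aestronglyMeasurable u₀) hu₀.2)).abs
      have hint2 : Integrable (fun r => Real.exp lam * |un n r - u₀ r|) sphereMeasure :=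
        ((((Lp.memLp (un n)).integrable one_le_two).sub ((Lp.memLp u₀).integrable one_le_two)).abs).const_mul _
      rw [hδdef, ← integral_const_mul]
      refine integral_mono_ae hint1 (by simpa using hint2) ?_
      filter_upwards [(hun n).2, hu₀.2] with r h1 h2
      have := abs_exp_sub_exp_le (c := lam) (x := -(un n r)) (y := -(u₀ r))
        (by linarith [(abs_le.mp h1).1]) (by linarith [(abs_le.mp h2).1])
      calc |Real.exp (-(un n r)) - Real.exp (-(u₀ r))|
          ≤ Real.exp lam * |(-(un n r)) - (-(u₀ r))| := this
        _ = Real.exp lam * |un n r - u₀ r| := by rw [← abs_neg]; ring_nf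
    -- ∫ |un n - u₀| → 0
    have hL1 : Tendsto (fun n => ∫ r, |un n r - u₀ r| ∂sphereMeasure) atTop (𝓝 0) := by
      set K := ((sphereMeasure Set.univ) ^ (1 / (1 : ℝ≥0∞).toReal - 1 / (2 : ℝ≥0∞).toReal)).toReal
        with hK
      have hbound : ∀ n, ∫ r, |un n r - u₀ r| ∂sphereMeasure ≤ dist (un n) u₀ * K := by
        intro n
        have hmem : MemLp (fun r => un n r - u₀ r) 2 sphereMeasure :=
          (Lp.memLp (un n)).sub (Lp.memLp u₀)
        have heq : ∫ r, |un n r - u₀ r| ∂sphereMeasure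
            = (eLpNorm (fun r => un n r - u₀ r) 1 sphereMeasure).toReal := by
          rw [eLpNorm_one_eq_lintegral_enorm,
            ← integral_norm_eq_lintegral_enorm hmem.aestronglyMeasurable]
          simp [Real.norm_eq_abs]
        rw [heq]
        have hle := eLpNorm_le_eLpNorm_mul_rpow_measure_univ (p := 1) (q := 2)
          (by norm_num) hmem.aestronglyMeasurable (μ := sphereMeasure)
        have hexp : (0 : ℝ) ≤ 1 / (1 : ℝ≥0∞).toReal - 1 / (2 : ℝ≥0∞).toReal := by
          norm_num
        have hne : eLpNorm (fun r => un n r - u₀ r) 2 sphereMeasure *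
            (sphereMeasure Set.univ) ^ (1 / (1 : ℝ≥0∞).toReal - 1 / (2 : ℝ≥0∞).toReal) ≠ ⊤ := by
          refine ENNReal.mul_ne_top hmem.eLpNorm_ne_top ?_
          exact ENNReal.rpow_ne_top_of_nonneg hexp (measure_ne_top _ _)
        calc (eLpNorm (fun r => un n r - u₀ r) 1 sphereMeasure).toReal
            ≤ (eLpNorm (fun r => un n r - u₀ r) 2 sphereMeasure *
              (sphereMeasure Set.univ) ^ (1 / (1 : ℝ≥0∞).toReal - 1 / (2 : ℝ≥0∞).toReal)).toReal :=
              ENNReal.toReal_mono hne hle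
          _ = dist (un n) u₀ * K := by
              rw [ENNReal.toReal_mul, Lp.dist_def, hK]
              rfl
      have hd : Tendsto (fun n => dist (un n) u₀ * K) atTop (𝓝 0) := by
        have : Tendsto (fun n => dist (un n) u₀) atTop (𝓝 0) :=
          (tendsto_iff_dist_tendsto_zero.mp htend)
        simpa using this.mul_const K
      exact squeeze_zero (fun n => integral_nonneg fun r => abs_nonneg _) hbound hd
    have hδtend : Tendsto δ atTop (𝓝 0) := by
      refine squeeze_zero hδ0 hδle ?_
      simpa using hL1.const_mul (Real.exp lam)
    -- conclude
    have hbound : ∀ n, eLpNorm (fun r => GammaS (un n) r - GammaS u₀ r) 2 sphereMeasure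
        ≤ (sphereMeasure Set.univ) ^ ((2:ℝ≥0∞).toReal)⁻¹ * ENNReal.ofReal (2 / c0 * δ n) := by
      intro n
      refine eLpNorm_le_of_ae_bound (Filter.Eventually.of_forall fun r => ?_)
      rw [Real.norm_eq_abs]
      exact gammaS_diff_le hlam (Lp.aestronglyMeasurable (un n)) (hun n).2
        (Lp.aestronglyMeasurable u₀) hu₀.2 r
    have hrhs : Tendsto (fun n => (sphereMeasure Set.univ) ^ ((2:ℝ≥0∞).toReal)⁻¹ *
        ENNReal.ofReal (2 / c0 * δ n)) atTop (𝓝 0) := by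
      have h1 : Tendsto (fun n => ENNReal.ofReal (2 / c0 * δ n)) atTop (𝓝 0) := by
        have := hδtend.const_mul (2 / c0)
        rw [mul_zero] at this
        simpa [ENNReal.ofReal_zero, Function.comp_def] using (ENNReal.continuous_ofReal.tendsto 0).comp this
      have h2 : Tendsto (fun n => (sphereMeasure Set.univ ^ ((2 : ℝ≥0∞).toReal)⁻¹) *
          ENNReal.ofReal (2 / c0 * δ n)) atTop
          (𝓝 ((sphereMeasure Set.univ ^ ((2 : ℝ≥0∞).toReal)⁻¹) * 0)) :=
        ENNReal.Tendsto.const_mul h1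
          (Or.inr (ENNReal.rpow_ne_top_of_nonneg (by positivity) (measure_ne_top _ _)))
      simpa using h2
    exact tendsto_of_tendsto_of_tendsto_of_le_of_le tendsto_const_nhds hrhs
      (fun n => zero_le) hbound
  · -- compactness
    set A : Set (S2 →ᵇ ℝ) :=
      {f | LipschitzWith 1 f ∧ ∀ x, f x ∈ Set.Icc (-1 : ℝ) 1} with hAdef
    have hAclosed : IsClosed A := by
      have h1 : IsClosed {f : S2 →ᵇ ℝ | LipschitzWith 1 f} := by
        have : {f : S2 →ᵇ ℝ | LipschitzWith 1 f} =
            ⋂ (x : S2), ⋂ (y : S2), {f : S2 →ᵇ ℝ | dist (f x) (f y) ≤ (1 : ℝ≥0) * dist x y} := by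
          ext f
          simp only [Set.mem_setOf_eq, Set.mem_iInter, lipschitzWith_iff_dist_le_mul]
        rw [this]
        refine isClosed_iInter fun x => isClosed_iInter fun y => ?_
        exact isClosed_le
          ((continuous_eval_const (x := x)).dist
            (continuous_eval_const (x := y))) continuous_const
      have h2 : IsClosed {f : S2 →ᵇ ℝ | ∀ x, f x ∈ Set.Icc (-1 : ℝ) 1} := by
        have : {f : S2 →ᵇ ℝ | ∀ x, f x ∈ Set.Icc (-1 : ℝ) 1} =
            ⋂ (x : S2), (fun f : S2 →ᵇ ℝ => f x) ⁻¹' Set.Icc (-1 : ℝ) 1 := by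
          ext f; simp [Set.mem_iInter]
        rw [this]
        exact isClosed_iInter fun x =>
          IsClosed.preimage (continuous_eval_const x) isClosed_Icc
      exact h1.inter h2
    have hAequi : Equicontinuous ((↑) : A → S2 → ℝ) := by
      intro x
      rw [Metric.equicontinuousAt_iff]
      intro ε hε
      refine ⟨ε, hε, fun y hy f => ?_⟩
      calc dist (f.1 x) (f.1 y) ≤ 1 * dist x y := lipschitzWith_iff_dist_le_mul.mp f.2.1 x y
        _ < ε := by rwa [one_mul, dist_comm]
    have hAcomp : IsCompact A :=
      BoundedContinuousFunction.arzela_ascoli₂ (Set.Icc (-1 : ℝ) 1) isCompact_Icc A hAclosed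
        (fun f x hf => hf.2 x) hAequi
    set ι := BoundedContinuousFunction.toLp (E := ℝ) 2 sphereMeasure ℝ with hι
    have himage : IsCompact (ι '' A) := hAcomp.image ι.continuous
    refine IsCompact.of_isClosed_subset himage isClosed_closure ?_
    refine closure_minimal ?_ himage.isClosed
    rintro f ⟨u, hu, hae⟩
    have hlip := gammaS_lipschitz hlam (Lp.aestronglyMeasurable u) hu.2
    have hbd := gammaS_abs_le hlam (Lp.aestronglyMeasurable u) hu.2
    set g : S2 →ᵇ ℝ := BoundedContinuousFunction.ofNormedAddCommGroup (GammaS ⇑u)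
      hlip.continuous 1 (fun x => by rw [Real.norm_eq_abs]; exact hbd x) with hg
    have hgcoe : ⇑g = GammaS ⇑u := rfl
    refine ⟨g, ⟨?_, ?_⟩, ?_⟩
    · rw [hgcoe] at *
      exact hlip
    · intro x
      rw [Set.mem_Icc, ← abs_le]
      exact hbd x
    · refine (Lp.ext ?_ : ι g = f)
      refine (BoundedContinuousFunction.coeFn_toLp 2 sphereMeasure ℝ g).trans ?_
      rw [hgcoe]
      exact hae.symm
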